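/- Let n ≥ 1 be a natural number, E a finite-dimensional real normed vector space, H : ℝ → ℝ a continuous function, and T, N, y : ℝ → E differentiable functions satisfying, for all s: T'(s) = −(n H(s)/2)·N(s) − y(s), N'(s) = (n H(s)/2)·T(s), and y'(s) = T(s). Then for every s ∈ ℝ, the vectors T(s), N(s) and y(s) all lie in the linear span of {T(0), N(0), y(0)}. -/

import Mathlib

open Set

/-- An integral curve of `e₁` on a biconservative hypersurface of `Sⁿ⁺¹`
lies in the 3-plane spanned by the initial tangent, normal and position vectors. -/
theorem stmt_3 (n : ℕ) (hn : 1 ≤ n) (E : Type*) [NormedAddCommGroup E]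
    [NormedSpace ℝ E] [FiniteDimensional ℝ E]
    (H : ℝ → ℝ) (hH : Continuous H)
    (T N y : ℝ → E) (hT : Differentiable ℝ T) (hN : Differentiable ℝ N)
    (hy : Differentiable ℝ y)
    (hT' : ∀ s : ℝ, deriv T s = (-((n : ℝ) * H s / 2)) • N s - y s)
    (hN' : ∀ s : ℝ, deriv N s = ((n : ℝ) * H s / 2) • T s)
    (hy' : ∀ s : ℝ, deriv y s = T s) :
    ∀ s : ℝ,
      T s ∈ Submodule.span ℝ ({T 0, N 0, y 0} : Set E) ∧
      N s ∈ Submodule.span ℝ ({T 0, N 0, y 0} : Set E) ∧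
      y s ∈ Submodule.span ℝ ({T 0, N 0, y 0} : Set E) := by
  intro s₀
  set S : Submodule ℝ E := Submodule.span ℝ ({T 0, N 0, y 0} : Set E) with hSdef
  haveI : IsClosed (S : Set E) := S.closed_of_finiteDimensional
  set Q := E ⧸ S
  let π : E →L[ℝ] Q := LinearMap.toContinuousLinearMap S.mkQ
  -- coefficient
  set c : ℝ → ℝ := fun t => (n : ℝ) * H t / 2 with hcdef
  have hc : Continuous c := by continuity
  -- interval
  set a : ℝ := -(|s₀| + 1)
  set b : ℝ := |s₀| + 1
  have hab : a < b := by
    have := abs_nonneg s₀; simp only [a, b]; linarith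
  have h0mem : (0 : ℝ) ∈ Ioo a b := by
    constructor <;> simp only [a, b] <;> [nlinarith [abs_nonneg s₀]; nlinarith [abs_nonneg s₀]]
  have hs₀mem : s₀ ∈ Icc a b := by
    constructor <;> simp only [a, b] <;> [nlinarith [neg_abs_le s₀]; nlinarith [le_abs_self s₀]]
  -- bound on coefficient
  obtain ⟨M, hM⟩ : ∃ M : ℝ, ∀ t ∈ Icc a b, ‖c t‖ ≤ M :=
    (isCompact_Icc).exists_bound_of_continuousOn hc.continuousOn
  have hM0 : 0 ≤ M := le_trans (norm_nonneg _) (hM 0 (Ioo_subset_Icc_self h0mem))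
  -- truncated coefficient
  set c' : ℝ → ℝ := fun t => c (min (max t a) b) with hc'def
  have hc'bound : ∀ t : ℝ, ‖c' t‖ ≤ M := by
    intro t
    apply hM
    constructor
    · exact le_min (le_max_right t a) hab.le
    · exact min_le_right _ _
  have hc'eq : ∀ t ∈ Icc a b, c' t = c t := by
    intro t ht
    simp only [hc'def]
    rw [max_eq_left ht.1, min_eq_left ht.2]
  -- vector field
  set v : ℝ → Q × Q × Q → Q × Q × Q :=
    fun t p => (-(c' t) • p.2.1 - p.2.2, (c' t) • p.1, p.1) with hvdef
  have hK0 : (0 : ℝ) ≤ M + 1 := by linarith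
  have hv : ∀ t : ℝ, LipschitzOnWith (⟨M + 1, hK0⟩ : NNReal) (v t) univ := by
    intro t
    refine lipschitzOnWith_univ.mpr ?_
    apply LipschitzWith.of_dist_le_mul
    intro p q
    have h1 : dist p.1 q.1 ≤ dist p q := by
      rw [Prod.dist_eq]; exact le_max_left _ _
    have h2 : dist p.2 q.2 ≤ dist p q := by
      rw [Prod.dist_eq]; exact le_max_right _ _
    have h21 : dist p.2.1 q.2.1 ≤ dist p q :=
      le_trans (by rw [Prod.dist_eq]; exact le_max_left _ _) h2
    have h22 : dist p.2.2 q.2.2 ≤ dist p q :=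
      le_trans (by rw [Prod.dist_eq]; exact le_max_right _ _) h2
    have hd0 : 0 ≤ dist p q := dist_nonneg
    have hcb := hc'bound t
    have hcn : 0 ≤ ‖c' t‖ := norm_nonneg _
    rw [Prod.dist_eq, Prod.dist_eq]
    change _ ≤ (M + 1) * _
    apply max_le
    · calc dist (-c' t • p.2.1 - p.2.2) (-c' t • q.2.1 - q.2.2)
          ≤ dist (-c' t • p.2.1) (-c' t • q.2.1) + dist p.2.2 q.2.2 := dist_sub_sub_le _ _ _ _
        _ = ‖c' t‖ * dist p.2.1 q.2.1 + dist p.2.2 q.2.2 := by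
            rw [dist_smul₀, norm_neg]
        _ ≤ M * dist p q + dist p q := by
            have : ‖c' t‖ * dist p.2.1 q.2.1 ≤ M * dist p q :=
              mul_le_mul hcb h21 dist_nonneg hM0
            linarith
        _ = (M + 1) * dist p q := by ring
    · apply max_le
      · calc dist (c' t • p.1) (c' t • q.1) = ‖c' t‖ * dist p.1 q.1 := dist_smul₀ _ _ _
          _ ≤ M * dist p q := mul_le_mul hcb h1 dist_nonneg hM0
          _ ≤ (M + 1) * dist p q := by nlinarith
      · calc dist p.1 q.1 ≤ dist p q := h1
          _ ≤ (M + 1) * dist p q := by nlinarith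
  -- the function and its derivative
  set f : ℝ → Q × Q × Q := fun t => (π (T t), π (N t), π (y t)) with hfdef
  have hf' : ∀ t ∈ Ioo a b, HasDerivAt f (v t (f t)) t := by
    intro t ht
    have hT1 : HasDerivAt (fun u => π (T u)) (π (deriv T t)) t :=
      π.hasFDerivAt.comp_hasDerivAt t (hT t).hasDerivAt
    have hN1 : HasDerivAt (fun u => π (N u)) (π (deriv N t)) t :=
      π.hasFDerivAt.comp_hasDerivAt t (hN t).hasDerivAt
    have hy1 : HasDerivAt (fun u => π (y u)) (π (deriv y t)) t :=
      π.hasFDerivAt.comp_hasDerivAt t (hy t).hasDerivAt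
    have := hT1.prodMk (hN1.prodMk hy1)
    convert this using 1
    simp only [hvdef, hfdef, hT', hN', hy', hc'eq t (Ioo_subset_Icc_self ht), hcdef]
    refine Prod.ext ?_ (Prod.ext ?_ rfl) <;> simp [map_sub, map_smul, map_neg]
  have hfc : ContinuousOn f (Icc a b) := by
    apply Continuous.continuousOn
    exact (π.continuous.comp hT.continuous).prodMk
      ((π.continuous.comp hN.continuous).prodMk (π.continuous.comp hy.continuous))
  -- the zero solution
  have hg' : ∀ t ∈ Ioo a b, HasDerivAt (fun _ : ℝ => (0 : Q × Q × Q)) (v t 0) t := by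
    intro t _
    have : v t 0 = 0 := by simp [hvdef]
    rw [this]
    exact hasDerivAt_const _ _
  -- initial condition
  have hf0 : f 0 = 0 := by
    have hT0 : T 0 ∈ S := Submodule.subset_span (by simp)
    have hN0 : N 0 ∈ S := Submodule.subset_span (by simp)
    have hy0 : y 0 ∈ S := Submodule.subset_span (by simp)
    simp only [hfdef]
    refine Prod.ext ?_ (Prod.ext ?_ ?_)
    · exact (Submodule.Quotient.mk_eq_zero S).mpr hT0
    · exact (Submodule.Quotient.mk_eq_zero S).mpr hN0
    · exact (Submodule.Quotient.mk_eq_zero S).mpr hy0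
  -- uniqueness
  have heq : EqOn f (fun _ => (0 : Q × Q × Q)) (Icc a b) :=
    ODE_solution_unique_of_mem_Icc (fun t _ => hv t) h0mem hfc hf' (fun _ _ => mem_univ _)
      continuousOn_const hg' (fun _ _ => mem_univ _) hf0
  have hfs₀ : f s₀ = 0 := heq hs₀mem
  have h1 : π (T s₀) = 0 := congrArg Prod.fst hfs₀
  have h2 : π (N s₀) = 0 := congrArg (fun p => p.2.1) hfs₀
  have h3 : π (y s₀) = 0 := congrArg (fun p => p.2.2) hfs₀
  refine ⟨?_, ?_, ?_⟩ <;>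
    [skip; skip; skip] <;>
    · first
      | exact (Submodule.Quotient.mk_eq_zero S).mp h1
      | exact (Submodule.Quotient.mk_eq_zero S).mp h2
      | exact (Submodule.Quotient.mk_eq_zero S).mp h3
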